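/- arXiv:1705.02679 — 2 statements merged into one kernel-verified Lean document; each statement's English description precedes it below -/
import Mathlib

section
/- For vectors X₁,…,Xₙ, Y₁,…,Yₙ ∈ ℝ^d, the operator norm satisfies ‖∑ᵢ Xᵢ Yᵢᵀ‖_∞ ≤ ‖∑ᵢ Xᵢ Xᵢᵀ‖_∞^{1/2} · ‖∑ᵢ Yᵢ Yᵢᵀ‖_∞^{1/2}. -/
open Matrix Finset

/-- The operator norm of a real square matrix with respect to the Euclidean `ℓ²` norm. -/
noncomputable def opNorm {d : ℕ} (M : Matrix (Fin d) (Fin d) ℝ) : ℝ :=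
  ‖(Matrix.toEuclideanLin M).toContinuousLinearMap‖


lemma key1 {d : ℕ} (w z : Fin d → ℝ) (u v : EuclideanSpace ℝ (Fin d)) :
    inner ℝ u (Matrix.toEuclideanLin (Matrix.vecMulVec w z) v) =
      (∑ j, u j * w j) * (∑ k, z k * v k) := by
  rw [Matrix.toEuclideanLin_apply]
  simp only [PiLp.inner_apply, RCLike.inner_apply, conj_trivial, PiLp.toLp_apply,
    Matrix.mulVec, dotProduct, Matrix.vecMulVec_apply,
    WithLp.ofLp_toLp, Finset.mul_sum, Finset.sum_mul]
  rw [Finset.sum_comm]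
  exact Finset.sum_congr rfl fun j _ => Finset.sum_congr rfl fun k _ => by ring

lemma key {d n : ℕ} (X Y : Fin n → Fin d → ℝ) (u v : EuclideanSpace ℝ (Fin d)) :
    inner ℝ u (Matrix.toEuclideanLin (∑ i, Matrix.vecMulVec (X i) (Y i)) v) =
      ∑ i, (∑ j, u j * X i j) * (∑ k, Y i k * v k) := by
  rw [map_sum]
  simp only [LinearMap.coe_sum, Finset.sum_apply, inner_sum]
  exact Finset.sum_congr rfl fun i _ => key1 _ _ _ _

lemma quad_bound {d n : ℕ} (X : Fin n → Fin d → ℝ) (u : EuclideanSpace ℝ (Fin d)) :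
    ∑ i, (∑ j, u j * X i j) ^ 2 ≤
      opNorm (∑ i, Matrix.vecMulVec (X i) (X i)) * ‖u‖ ^ 2 := by
  have h := key X X u u
  have h2 : ∑ i, (∑ j, u j * X i j) ^ 2 =
      inner ℝ u (Matrix.toEuclideanLin (∑ i, Matrix.vecMulVec (X i) (X i)) u) := by
    rw [h]
    exact Finset.sum_congr rfl fun i _ => by
      rw [sq]; congr 1; exact Finset.sum_congr rfl fun j _ => mul_comm _ _
  rw [h2]
  set T := (Matrix.toEuclideanLin (∑ i, Matrix.vecMulVec (X i) (X i))).toContinuousLinearMap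
  have hT : Matrix.toEuclideanLin (∑ i, Matrix.vecMulVec (X i) (X i)) u = T u := rfl
  calc inner ℝ u (Matrix.toEuclideanLin (∑ i, Matrix.vecMulVec (X i) (X i)) u)
      ≤ ‖u‖ * ‖T u‖ := by rw [hT]; exact real_inner_le_norm u (T u)
    _ ≤ ‖u‖ * (‖T‖ * ‖u‖) := by
        gcongr; exact T.le_opNorm u
    _ = opNorm (∑ i, Matrix.vecMulVec (X i) (X i)) * ‖u‖ ^ 2 := by
        unfold opNorm; ring

set_option maxHeartbeats 1000000 in
/-- For vectors `X₁,…,Xₙ, Y₁,…,Yₙ ∈ ℝ^d`, the operator norm satisfies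
`‖∑ᵢ Xᵢ Yᵢᵀ‖_∞ ≤ ‖∑ᵢ Xᵢ Xᵢᵀ‖_∞^{1/2} · ‖∑ᵢ Yᵢ Yᵢᵀ‖_∞^{1/2}`. -/
theorem opNorm_sum_outer_le {d n : ℕ} (X Y : Fin n → Fin d → ℝ) :
    opNorm (∑ i, Matrix.vecMulVec (X i) (Y i)) ≤
      Real.sqrt (opNorm (∑ i, Matrix.vecMulVec (X i) (X i))) *
        Real.sqrt (opNorm (∑ i, Matrix.vecMulVec (Y i) (Y i))) := by
  set a := opNorm (∑ i, Matrix.vecMulVec (X i) (X i)) with ha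
  set b := opNorm (∑ i, Matrix.vecMulVec (Y i) (Y i)) with hb
  have ha0 : 0 ≤ a := norm_nonneg _
  have hb0 : 0 ≤ b := norm_nonneg _
  refine ContinuousLinearMap.opNorm_le_bound _
    (mul_nonneg (Real.sqrt_nonneg _) (Real.sqrt_nonneg _)) fun v => ?_
  set T := (Matrix.toEuclideanLin (∑ i, Matrix.vecMulVec (X i) (Y i))).toContinuousLinearMap
  set u := T v with hu
  rcases eq_or_lt_of_le (norm_nonneg u) with h0 | h0
  · rw [← h0]
    positivity
  have hsq : ‖u‖ ^ 2 = ∑ i, (∑ j, u j * X i j) * (∑ k, Y i k * v k) := by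
    rw [← key X Y u v, ← real_inner_self_eq_norm_sq]; rfl
  have hCS : ∑ i, (∑ j, u j * X i j) * (∑ k, Y i k * v k) ≤
      Real.sqrt (∑ i, (∑ j, u j * X i j) ^ 2) *
        Real.sqrt (∑ i, (∑ k, Y i k * v k) ^ 2) := by
    rw [← Real.sqrt_mul (by positivity)]
    calc ∑ i, (∑ j, u j * X i j) * (∑ k, Y i k * v k)
        ≤ Real.sqrt ((∑ i, (∑ j, u j * X i j) * (∑ k, Y i k * v k)) ^ 2) := by
          rw [Real.sqrt_sq_eq_abs]; exact le_abs_self _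
      _ ≤ _ := Real.sqrt_le_sqrt (Finset.sum_mul_sq_le_sq_mul_sq _ _ _)
  have hX : Real.sqrt (∑ i, (∑ j, u j * X i j) ^ 2) ≤ Real.sqrt a * ‖u‖ := by
    rw [← Real.sqrt_sq (norm_nonneg u), ← Real.sqrt_mul ha0]
    exact Real.sqrt_le_sqrt (quad_bound X u)
  have hY : Real.sqrt (∑ i, (∑ k, Y i k * v k) ^ 2) ≤ Real.sqrt b * ‖v‖ := by
    rw [← Real.sqrt_sq (norm_nonneg (v : EuclideanSpace ℝ (Fin d))),
      ← Real.sqrt_mul hb0]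
    refine Real.sqrt_le_sqrt ?_
    have := quad_bound Y v
    calc ∑ i, (∑ k, Y i k * v k) ^ 2 = ∑ i, (∑ k, (v : EuclideanSpace ℝ (Fin d)) k * Y i k) ^ 2 := by
          exact Finset.sum_congr rfl fun i _ => by
            congr 1; exact Finset.sum_congr rfl fun k _ => mul_comm _ _
      _ ≤ b * ‖v‖ ^ 2 := quad_bound Y v
  have hfin : ‖u‖ ^ 2 ≤ (Real.sqrt a * ‖u‖) * (Real.sqrt b * ‖v‖) := by
    rw [hsq]
    exact hCS.trans (mul_le_mul hX hY (Real.sqrt_nonneg _) (by positivity))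
  have : ‖u‖ * ‖u‖ ≤ (Real.sqrt a * Real.sqrt b * ‖v‖) * ‖u‖ := by nlinarith [hfin]
  exact le_of_mul_le_mul_right (by linarith [this]) h0
end

section
/- The map (X₁,…,Xₙ) ↦ ‖(1/n) ∑ᵢ Xᵢ Xᵢᵀ‖₂^{1/2} from (ℝ^d)^n to ℝ is Lipschitz with constant n^{-1/2} with respect to the metric d((X₁,…,Xₙ),(Y₁,…,Yₙ)) = (∑ᵢ ‖Xᵢ − Yᵢ‖_{ℓ²}²)^{1/2}. -/
open Matrix

/-- The Frobenius (2-Schatten) norm of a real square matrix: `‖M‖₂ = √(trace(MᵀM))`. -/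
noncomputable def frobNorm {d : ℕ} (M : Matrix (Fin d) (Fin d) ℝ) : ℝ :=
  Real.sqrt ((Mᵀ * M).trace)

attribute [local instance] Matrix.frobeniusNormedAddCommGroup Matrix.frobeniusNormedSpace

namespace FrobAux

lemma norm_eq_sqrt {a b : ℕ} (M : Matrix (Fin a) (Fin b) ℝ) :
    ‖M‖ = Real.sqrt (∑ i, ∑ j, (M i j) ^ 2) := by
  rw [Matrix.frobenius_norm_def, Real.sqrt_eq_rpow]
  congr 1
  refine Finset.sum_congr rfl fun i _ => Finset.sum_congr rfl fun j _ => ?_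
  rw [show ((2 : ℝ) = ((2 : ℕ) : ℝ)) by norm_num, Real.rpow_natCast, Real.norm_eq_abs, sq_abs]

lemma sq_norm {a b : ℕ} (M : Matrix (Fin a) (Fin b) ℝ) :
    ‖M‖ ^ 2 = ∑ i, ∑ j, (M i j) ^ 2 := by
  rw [norm_eq_sqrt, Real.sq_sqrt]
  exact Finset.sum_nonneg fun i _ => Finset.sum_nonneg fun j _ => sq_nonneg _

lemma frobNorm_eq_norm {d : ℕ} (M : Matrix (Fin d) (Fin d) ℝ) : frobNorm M = ‖M‖ := by
  rw [frobNorm, norm_eq_sqrt]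
  congr 1
  rw [Matrix.trace, Finset.sum_comm]
  refine Finset.sum_congr rfl fun i _ => ?_
  simp [Matrix.diag, Matrix.mul_apply, sq]

/-- Cauchy–Schwarz for the quadratic form: `∑ⱼₖ Mⱼₖ vⱼ vₖ ≤ ‖M‖_F ‖v‖²`. -/
lemma quad_le {a : ℕ} (M : Matrix (Fin a) (Fin a) ℝ) (v : Fin a → ℝ) :
    ∑ j, ∑ k, M j k * (v j * v k) ≤ ‖M‖ * ∑ j, (v j) ^ 2 := by
  have h := Finset.sum_mul_sq_le_sq_mul_sq Finset.univ (fun p : Fin a × Fin a => M p.1 p.2)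
    (fun p : Fin a × Fin a => v p.1 * v p.2)
  rw [← Finset.sum_product'] at *
  have h1 : (∑ p : Fin a × Fin a, (v p.1 * v p.2) ^ 2) = (∑ j, (v j) ^ 2) ^ 2 := by
    rw [sq (∑ j, (v j) ^ 2), Finset.sum_mul_sum, ← Finset.sum_product']
    refine Finset.sum_congr rfl fun p _ => ?_
    ring
  have h2 : (∑ p : Fin a × Fin a, (M p.1 p.2) ^ 2) = ‖M‖ ^ 2 := by
    rw [sq_norm, ← Finset.sum_product', Finset.univ_product_univ]
  rw [h1, h2] at h
  have hv : (0 : ℝ) ≤ ∑ j, (v j) ^ 2 := Finset.sum_nonneg fun j _ => sq_nonneg _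
  calc ∑ p : Fin a × Fin a, M p.1 p.2 * (v p.1 * v p.2)
      ≤ |∑ p : Fin a × Fin a, M p.1 p.2 * (v p.1 * v p.2)| := le_abs_self _
    _ ≤ ‖M‖ * ∑ j, (v j) ^ 2 := by
        rw [← Real.sqrt_sq_eq_abs]
        calc Real.sqrt ((∑ p : Fin a × Fin a, M p.1 p.2 * (v p.1 * v p.2)) ^ 2)
            ≤ Real.sqrt (‖M‖ ^ 2 * (∑ j, (v j) ^ 2) ^ 2) := Real.sqrt_le_sqrt h
          _ = ‖M‖ * ∑ j, (v j) ^ 2 := by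
              rw [Real.sqrt_mul (sq_nonneg _), Real.sqrt_sq (norm_nonneg _), Real.sqrt_sq hv]

lemma sq_norm_eq_trace {a b : ℕ} (M : Matrix (Fin a) (Fin b) ℝ) :
    ‖M‖ ^ 2 = (Mᵀ * M).trace := by
  rw [sq_norm, Finset.sum_comm]
  simp [Matrix.trace, Matrix.diag, Matrix.mul_apply, sq]

lemma norm_mul_transpose_comm {a b : ℕ} (G : Matrix (Fin a) (Fin b) ℝ) :
    ‖G * Gᵀ‖ = ‖Gᵀ * G‖ := by
  have h1 : ‖G * Gᵀ‖ ^ 2 = ‖Gᵀ * G‖ ^ 2 := by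
    rw [sq_norm_eq_trace, sq_norm_eq_trace, Matrix.transpose_mul, Matrix.transpose_transpose,
      Matrix.transpose_mul, Matrix.transpose_transpose, Matrix.mul_assoc,
      Matrix.trace_mul_comm]
    congr 1
    rw [← Matrix.mul_assoc, ← Matrix.mul_assoc]
  calc ‖G * Gᵀ‖ = Real.sqrt (‖G * Gᵀ‖ ^ 2) := (Real.sqrt_sq (norm_nonneg _)).symm
    _ = Real.sqrt (‖Gᵀ * G‖ ^ 2) := by rw [h1]
    _ = ‖Gᵀ * G‖ := Real.sqrt_sq (norm_nonneg _)

lemma mul_norm_sq_le {n d : ℕ} (G D : Matrix (Fin n) (Fin d) ℝ) :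
    ‖Gᵀ * D‖ ^ 2 ≤ ‖Gᵀ * G‖ * ‖D‖ ^ 2 := by
  have key : ∀ k, (∑ j, ((Gᵀ * D) j k) ^ 2) ≤ ‖G * Gᵀ‖ * ∑ i, (D i k) ^ 2 := by
    intro k
    have l1 : ∀ j, ((Gᵀ * D) j k) ^ 2
        = ∑ i, ∑ i', (Gᵀ j i * D i k) * (Gᵀ j i' * D i' k) := fun j => by
      rw [Matrix.mul_apply, sq, Finset.sum_mul_sum]
    have e1 : (∑ j, ((Gᵀ * D) j k) ^ 2)
        = ∑ i, ∑ i', (G * Gᵀ) i i' * (D i k * D i' k) := by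
      simp_rw [l1]
      calc (∑ j, ∑ i, ∑ i', (Gᵀ j i * D i k) * (Gᵀ j i' * D i' k))
          = ∑ i, ∑ j, ∑ i', (Gᵀ j i * D i k) * (Gᵀ j i' * D i' k) := Finset.sum_comm
        _ = ∑ i, ∑ i', ∑ j, (Gᵀ j i * D i k) * (Gᵀ j i' * D i' k) :=
            Finset.sum_congr rfl fun i _ => Finset.sum_comm
        _ = ∑ i, ∑ i', (G * Gᵀ) i i' * (D i k * D i' k) := by
            refine Finset.sum_congr rfl fun i _ => Finset.sum_congr rfl fun i' _ => ?_
            rw [Matrix.mul_apply, Finset.sum_mul]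
            refine Finset.sum_congr rfl fun j _ => ?_
            simp only [Matrix.transpose_apply]
            ring
    rw [e1]
    exact quad_le (G * Gᵀ) fun i => D i k
  calc ‖Gᵀ * D‖ ^ 2 = ∑ k, ∑ j, ((Gᵀ * D) j k) ^ 2 := by rw [sq_norm, Finset.sum_comm]
    _ ≤ ∑ k, ‖G * Gᵀ‖ * ∑ i, (D i k) ^ 2 := Finset.sum_le_sum fun k _ => key k
    _ = ‖G * Gᵀ‖ * ∑ k, ∑ i, (D i k) ^ 2 := by rw [Finset.mul_sum]
    _ = ‖Gᵀ * G‖ * ‖D‖ ^ 2 := by rw [norm_mul_transpose_comm, sq_norm, Finset.sum_comm]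

lemma mul_norm_le {n d : ℕ} (G D : Matrix (Fin n) (Fin d) ℝ) :
    ‖Gᵀ * D‖ ≤ Real.sqrt ‖Gᵀ * G‖ * ‖D‖ := by
  calc ‖Gᵀ * D‖ = Real.sqrt (‖Gᵀ * D‖ ^ 2) := (Real.sqrt_sq (norm_nonneg _)).symm
    _ ≤ Real.sqrt (‖Gᵀ * G‖ * ‖D‖ ^ 2) := Real.sqrt_le_sqrt (mul_norm_sq_le G D)
    _ = Real.sqrt ‖Gᵀ * G‖ * ‖D‖ := by
        rw [Real.sqrt_mul (norm_nonneg _), Real.sqrt_sq (norm_nonneg _)]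

lemma sqrt_norm_lip {n d : ℕ} (G H : Matrix (Fin n) (Fin d) ℝ) :
    |Real.sqrt ‖Gᵀ * G‖ - Real.sqrt ‖Hᵀ * H‖| ≤ ‖G - H‖ := by
  set u := Real.sqrt ‖Gᵀ * G‖ with hu_def
  set v := Real.sqrt ‖Hᵀ * H‖ with hv_def
  have hu : 0 ≤ u := Real.sqrt_nonneg _
  have hv : 0 ≤ v := Real.sqrt_nonneg _
  have hsplit : Gᵀ * G - Hᵀ * H = Gᵀ * (G - H) + (G - H)ᵀ * H := by
    rw [Matrix.mul_sub, Matrix.transpose_sub, Matrix.sub_mul]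
    abel
  have h2 : ‖(G - H)ᵀ * H‖ = ‖Hᵀ * (G - H)‖ := by
    rw [← Matrix.frobenius_norm_transpose ((G - H)ᵀ * H), Matrix.transpose_mul,
      Matrix.transpose_transpose]
  have key : |u ^ 2 - v ^ 2| ≤ (u + v) * ‖G - H‖ := by
    rw [hu_def, hv_def, Real.sq_sqrt (norm_nonneg _), Real.sq_sqrt (norm_nonneg _)]
    calc |‖Gᵀ * G‖ - ‖Hᵀ * H‖| ≤ ‖Gᵀ * G - Hᵀ * H‖ := abs_norm_sub_norm_le _ _
      _ = ‖Gᵀ * (G - H) + (G - H)ᵀ * H‖ := by rw [hsplit]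
      _ ≤ ‖Gᵀ * (G - H)‖ + ‖(G - H)ᵀ * H‖ := norm_add_le _ _
      _ ≤ u * ‖G - H‖ + v * ‖G - H‖ := by
          refine add_le_add (mul_norm_le G (G - H)) ?_
          rw [h2]
          exact mul_norm_le H (G - H)
      _ = (u + v) * ‖G - H‖ := by ring
  rcases eq_or_lt_of_le (add_nonneg hu hv) with h0 | hpos
  · have hu0 : u = 0 := le_antisymm (by linarith) hu
    have hv0 : v = 0 := le_antisymm (by linarith) hv
    simp [hu0, hv0]
  · rw [← mul_le_mul_iff_of_pos_right hpos]
    calc |u - v| * (u + v) = |u - v| * |u + v| := by rw [abs_of_pos hpos]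
      _ = |(u - v) * (u + v)| := (abs_mul _ _).symm
      _ = |u ^ 2 - v ^ 2| := by ring_nf
      _ ≤ (u + v) * ‖G - H‖ := key
      _ = ‖G - H‖ * (u + v) := by ring

end FrobAux

/-- The map `(X₁,…,Xₙ) ↦ ‖(1/n) ∑ᵢ Xᵢ Xᵢᵀ‖₂^{1/2}` is Lipschitz with constant `n^{-1/2}`
with respect to the metric `d(X,Y) = (∑ᵢ ‖Xᵢ − Yᵢ‖_{ℓ²}²)^{1/2}`. -/
theorem frob_sqrt_lipschitz {d n : ℕ} (X Y : Fin n → Fin d → ℝ) :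
    |Real.sqrt (frobNorm ((n : ℝ)⁻¹ • ∑ i, Matrix.vecMulVec (X i) (X i))) -
        Real.sqrt (frobNorm ((n : ℝ)⁻¹ • ∑ i, Matrix.vecMulVec (Y i) (Y i)))| ≤
      (Real.sqrt n)⁻¹ * Real.sqrt (∑ i, ∑ k, (X i k - Y i k) ^ 2) := by
  have hA : (∑ i, Matrix.vecMulVec (X i) (X i)) = (Matrix.of X)ᵀ * (Matrix.of X) := by
    ext j k
    simp [Matrix.mul_apply, Matrix.vecMulVec_apply, Matrix.sum_apply]
  have hB : (∑ i, Matrix.vecMulVec (Y i) (Y i)) = (Matrix.of Y)ᵀ * (Matrix.of Y) := by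
    ext j k
    simp [Matrix.mul_apply, Matrix.vecMulVec_apply, Matrix.sum_apply]
  have hscale : ∀ M : Matrix (Fin d) (Fin d) ℝ,
      Real.sqrt (frobNorm ((n : ℝ)⁻¹ • M)) = (Real.sqrt n)⁻¹ * Real.sqrt ‖M‖ := by
    intro M
    rw [FrobAux.frobNorm_eq_norm, norm_smul, Real.norm_eq_abs,
      abs_of_nonneg (inv_nonneg.mpr (Nat.cast_nonneg n)),
      Real.sqrt_mul (inv_nonneg.mpr (Nat.cast_nonneg n)), Real.sqrt_inv]
  rw [hA, hB, hscale, hscale, ← mul_sub, abs_mul,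
    abs_of_nonneg (inv_nonneg.mpr (Real.sqrt_nonneg _))]
  have hrhs : Real.sqrt (∑ i, ∑ k, (X i k - Y i k) ^ 2) = ‖Matrix.of X - Matrix.of Y‖ := by
    rw [FrobAux.norm_eq_sqrt]
    simp [Matrix.sub_apply]
  rw [hrhs]
  exact mul_le_mul_of_nonneg_left (FrobAux.sqrt_norm_lip _ _)
    (inv_nonneg.mpr (Real.sqrt_nonneg _))
end
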